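/- If f is the subword complexity function of an infinite gap increasing word, then f(1) = 2, f(2) = 3, and |Δ²f(n)| ≤ 1 for all n ≥ 1, where Δf(n) = f(n+1) - f(n) and Δ²f(n) = Δf(n+1) - Δf(n). -/

import Mathlib

/-- `u` occurs in `w` starting at position `i` (positions are 1-indexed). -/
def FactorAt (w : ℕ → Fin 2) (i : ℕ) (u : List (Fin 2)) : Prop :=
  u = (List.range u.length).map (fun k => w (i + k))

/-- `u` is a subword (factor) of the infinite word `w`. -/
def IsFactor (w : ℕ → Fin 2) (u : List (Fin 2)) : Prop :=
  ∃ i, 1 ≤ i ∧ FactorAt w i u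

/-- The subword complexity function of `w`. -/
noncomputable def complexity (w : ℕ → Fin 2) (n : ℕ) : ℕ :=
  Set.ncard {u : List (Fin 2) | u.length = n ∧ IsFactor w u}

/-- `G` is the 1-distribution function of `w`: `G 0 = 0` and `G i` is the
position of the `i`-th `1` of `w` (positions 1-indexed). -/
def OneDistrib (w : ℕ → Fin 2) (G : ℕ → ℕ) : Prop :=
  G 0 = 0 ∧ StrictMono G ∧ ∀ p, 1 ≤ p → (w p = 1 ↔ ∃ i, 1 ≤ i ∧ G i = p)

/-- The gap function associated with a 1-distribution function `G`. -/
def gap (G : ℕ → ℕ) (i : ℕ) : ℕ := G i - G (i - 1)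

/-- The gap function is strictly increasing. -/
def GapIncreasing (G : ℕ → ℕ) : Prop :=
  ∀ i, 1 ≤ i → gap G i < gap G (i + 1)

/-- `u` is a right special factor of `w`. -/
def RightSpecial (w : ℕ → Fin 2) (u : List (Fin 2)) : Prop :=
  IsFactor w (u ++ [0]) ∧ IsFactor w (u ++ [1])

namespace GapWord

/-- the window of `w` of length `n` starting at `q`. -/
def wd (w : ℕ → Fin 2) (q n : ℕ) : List (Fin 2) :=
  (List.range n).map (fun k => w (q + k))

@[simp] lemma wd_length (w : ℕ → Fin 2) (q n : ℕ) : (wd w q n).length = n := by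
  simp [wd]

lemma wd_getElem (w : ℕ → Fin 2) {q n k : ℕ} (h : k < n) :
    (wd w q n)[k]'(by simpa using h) = w (q + k) := by
  simp [wd]

lemma fin_two_cases (x : Fin 2) : x = 0 ∨ x = 1 := by
  fin_cases x <;> simp

lemma fin_two_eq_zero {x : Fin 2} (h : x ≠ 1) : x = 0 := by
  rcases fin_two_cases x with h0 | h1
  · exact h0
  · exact absurd h1 h

lemma factorAt_wd (w : ℕ → Fin 2) (q n : ℕ) : FactorAt w q (wd w q n) := by
  unfold FactorAt wd
  rw [List.length_map, List.length_range]

lemma factorAt_iff_getElem {w : ℕ → Fin 2} {q : ℕ} {u : List (Fin 2)} :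
    FactorAt w q u ↔ ∀ k (h : k < u.length), u[k]'h = w (q + k) := by
  constructor
  · intro hf k h
    rw [List.getElem_of_eq hf]
    simp
  · intro h
    apply List.ext_getElem (by simp)
    intro k h1 h2
    rw [h k h1]
    simp

lemma isFactor_wd (w : ℕ → Fin 2) {q : ℕ} (hq : 1 ≤ q) (n : ℕ) :
    IsFactor w (wd w q n) := ⟨q, hq, factorAt_wd w q n⟩

lemma factorAt_concat {w : ℕ → Fin 2} {q : ℕ} {u : List (Fin 2)} {a : Fin 2} :
    FactorAt w q (u ++ [a]) ↔ FactorAt w q u ∧ w (q + u.length) = a := by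
  simp only [factorAt_iff_getElem]
  constructor
  · intro h
    refine ⟨fun k hk => ?_, ?_⟩
    · have := h k (by simp; omega)
      rwa [List.getElem_append_left hk] at this
    · have := h u.length (by simp)
      simpa using this.symm
  · rintro ⟨h1, h2⟩ k hk
    simp only [List.length_append, List.length_singleton] at hk
    rcases Nat.lt_or_ge k u.length with hk' | hk'
    · rw [List.getElem_append_left hk']
      exact h1 k hk'
    · have hke : k = u.length := by omega
      subst hke
      simpa using h2.symm

lemma isFactor_of_concat {w : ℕ → Fin 2} {u : List (Fin 2)} {a : Fin 2}
    (h : IsFactor w (u ++ [a])) : IsFactor w u := by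
  obtain ⟨q, hq, hf⟩ := h
  exact ⟨q, hq, (factorAt_concat.1 hf).1⟩

section Distrib

variable {w : ℕ → Fin 2} {G : ℕ → ℕ} (hG : OneDistrib w G) (hg : GapIncreasing G)
include hG

lemma G_pos {i : ℕ} (hi : 1 ≤ i) : 1 ≤ G i := by
  have := hG.2.1 (show 0 < i from hi)
  rw [hG.1] at this
  omega

lemma w_G_eq_one {i : ℕ} (hi : 1 ≤ i) : w (G i) = 1 := by
  rw [hG.2.2 _ (G_pos hG hi)]
  exact ⟨i, hi, rfl⟩

lemma w_eq_zero {p : ℕ} (hp : 1 ≤ p) (h : ∀ i, 1 ≤ i → G i ≠ p) : w p = 0 := by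
  apply fin_two_eq_zero
  intro hc
  rw [hG.2.2 p hp] at hc
  obtain ⟨i, hi, hie⟩ := hc
  exact h i hi hie

lemma w_between {j p : ℕ} (h1 : G j < p) (h2 : p < G (j+1)) : w p = 0 := by
  apply w_eq_zero hG (by omega)
  intro i hi hie
  subst hie
  rcases Nat.lt_or_ge i (j+1) with h | h
  · have : G i ≤ G j := hG.2.1.monotone (by omega)
    omega
  · have : G (j+1) ≤ G i := hG.2.1.monotone h
    omega

lemma G_pos_inv {i : ℕ} (h : 1 ≤ G i) : 1 ≤ i := by
  rcases Nat.eq_zero_or_pos i with h0 | h1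
  · subst h0; rw [hG.1] at h; omega
  · exact h1

lemma gap_pos {i : ℕ} (hi : 1 ≤ i) : 1 ≤ gap G i := by
  have h : G (i-1) < G i := hG.2.1 (by omega)
  unfold gap; omega

lemma G_eq_add_gap {i : ℕ} (hi : 1 ≤ i) : G i = G (i-1) + gap G i := by
  have h : G (i-1) < G i := hG.2.1 (by omega)
  unfold gap; omega

end Distrib

section Gap

variable {G : ℕ → ℕ} (hg : GapIncreasing G)
include hg

lemma gap_lt_gap {i j : ℕ} (hi : 1 ≤ i) (hij : i < j) : gap G i < gap G j := by
  induction j with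
  | zero => omega
  | succ m ih =>
    rcases Nat.lt_or_ge i m with h | h
    · exact lt_trans (ih h) (hg m (by omega))
    · have : i = m := by omega
      subst this
      exact hg i hi

lemma gap_injOn {i j : ℕ} (hi : 1 ≤ i) (hj : 1 ≤ j) (h : gap G i = gap G j) : i = j := by
  rcases Nat.lt_trichotomy i j with h' | h' | h'
  · have := gap_lt_gap hg hi h'; omega
  · exact h'
  · have := gap_lt_gap hg hj h'; omega

lemma le_gap {w : ℕ → Fin 2} (hG : OneDistrib w G) {i : ℕ} (hi : 1 ≤ i) : i ≤ gap G i := by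
  induction i with
  | zero => omega
  | succ m ih =>
    rcases Nat.eq_zero_or_pos m with h0 | h1
    · subst h0
      exact gap_pos hG (by omega)
    · have h2 := ih h1
      have := hg m h1
      omega

lemma gapsum_lt_gapsum {i j : ℕ} (hi : 2 ≤ i) (hij : i < j) :
    gap G i + gap G (i-1) < gap G j + gap G (j-1) := by
  have h1 : gap G i < gap G j := gap_lt_gap hg (by omega) hij
  have h2 : gap G (i-1) < gap G (j-1) := gap_lt_gap hg (by omega) (by omega)
  omega

end Gap

/-- the all-zeros word. -/
def zw (n : ℕ) : List (Fin 2) := List.replicate n 0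

/-- the word of length `n` with a single one at distance `g-1` from the right end. -/
def ow (n g : ℕ) : List (Fin 2) :=
  (List.range n).map (fun k => if k = n - g then 1 else 0)

@[simp] lemma zw_length (n : ℕ) : (zw n).length = n := by simp [zw]

@[simp] lemma ow_length (n g : ℕ) : (ow n g).length = n := by simp [ow]

lemma zw_getElem {n k : ℕ} (h : k < n) : (zw n)[k]'(by simpa using h) = 0 := by
  simp [zw]

lemma ow_getElem {n g k : ℕ} (h : k < n) :
    (ow n g)[k]'(by simpa using h) = if k = n - g then 1 else 0 := by
  simp [ow]

section Occur

variable {w : ℕ → Fin 2} {G : ℕ → ℕ} (hG : OneDistrib w G) (hg : GapIncreasing G)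
include hG hg

lemma zw_concat_one_isFactor (n : ℕ) : IsFactor w (zw n ++ [1]) := by
  set i := n + 1 with hi
  have hgap : n + 1 ≤ gap G i := le_of_eq_of_le rfl (le_gap hg hG (by omega))
  have hGi : G i = G (i-1) + gap G i := G_eq_add_gap hG (by omega)
  have hq : G i ≥ n + 1 := by omega
  have e1 : G (i - 1 + 1) = G i := by rw [show i - 1 + 1 = i by omega]
  refine ⟨G i - n, by omega, ?_⟩
  rw [factorAt_concat]
  constructor
  · rw [factorAt_iff_getElem]
    intro k hk
    rw [zw_length] at hk
    rw [zw_getElem hk]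
    exact (w_between hG (j := i - 1) (by omega) (by omega)).symm
  · rw [zw_length]
    have : G i - n + n = G i := by omega
    rw [this]
    exact w_G_eq_one hG (by omega)

lemma zw_isFactor (n : ℕ) : IsFactor w (zw n) :=
  isFactor_of_concat (zw_concat_one_isFactor hG hg n)

lemma zw_concat_zero_isFactor (n : ℕ) : IsFactor w (zw n ++ [0]) := by
  have : zw n ++ [0] = zw (n+1) := by
    simp [zw, List.replicate_succ]
    exact List.replicate_succ'.symm
  rw [this]
  exact zw_isFactor hG hg (n+1)

lemma ow_concat_zero_isFactor {n g : ℕ} (hg1 : 1 ≤ g) (hgn : g ≤ n) :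
    IsFactor w (ow n g ++ [0]) := by
  set j := n + 1 with hj
  have hgap : n + 1 ≤ gap G j := le_gap hg hG (by omega)
  have hgap2 : gap G j < gap G (j+1) := hg j (by omega)
  have hGj : G j = G (j-1) + gap G j := G_eq_add_gap hG (by omega)
  have hGj1 : G (j+1) = G j + gap G (j+1) := by
    have := G_eq_add_gap hG (i := j+1) (by omega)
    simpa using this
  have e1 : G (j - 1 + 1) = G j := by rw [show j - 1 + 1 = j by omega]
  refine ⟨G j - (n - g), by omega, ?_⟩
  rw [factorAt_concat]
  constructor
  · rw [factorAt_iff_getElem]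
    intro k hk
    rw [ow_length] at hk
    rw [ow_getElem hk]
    rcases Nat.lt_trichotomy k (n - g) with h | h | h
    · rw [if_neg (by omega)]
      exact (w_between hG (j := j - 1) (by omega) (by omega)).symm
    · rw [if_pos h]
      have : G j - (n - g) + k = G j := by omega
      rw [this]
      exact (w_G_eq_one hG (by omega)).symm
    · rw [if_neg (by omega)]
      exact (w_between hG (j := j) (by omega) (by omega)).symm
  · rw [ow_length]
    exact w_between hG (j := j) (by omega) (by omega)

omit hg in
lemma ow_concat_one_isFactor {n i : ℕ} (hi : 2 ≤ i) (h1 : gap G i ≤ n)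
    (h2 : n < gap G i + gap G (i-1)) : IsFactor w (ow n (gap G i) ++ [1]) := by
  have hGi : G i = G (i-1) + gap G i := G_eq_add_gap hG (by omega)
  have hGi1 : G (i-1) = G (i-2) + gap G (i-1) := by
    have := G_eq_add_gap hG (i := i-1) (by omega)
    have e : i - 1 - 1 = i - 2 := by omega
    rwa [e] at this
  have hgap1 : 1 ≤ gap G (i-1) := gap_pos hG (by omega)
  have hq : G (i-2) + 1 ≤ G i - n := by omega
  refine ⟨G i - n, by omega, ?_⟩
  rw [factorAt_concat]
  constructor
  · rw [factorAt_iff_getElem]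
    intro k hk
    rw [ow_length] at hk
    rw [ow_getElem hk]
    rcases Nat.lt_trichotomy k (n - gap G i) with h | h | h
    · rw [if_neg (by omega)]
      refine (w_between hG (j := i - 2) ?_ ?_).symm
      · omega
      · have e : i - 2 + 1 = i - 1 := by omega
        rw [e]; omega
    · rw [if_pos h]
      have : G i - n + k = G (i-1) := by omega
      rw [this]
      exact (w_G_eq_one hG (by omega)).symm
    · rw [if_neg (by omega)]
      refine (w_between hG (j := i - 1) (by omega) ?_).symm
      have e : i - 1 + 1 = i := by omega
      rw [e]; omega
  · rw [ow_length]
    have : G i - n + n = G i := by omega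
    rw [this]
    exact w_G_eq_one hG (by omega)

omit hg in
/-- If `u ++ [1]` is a factor, `u` is the window ending just before some `1`. -/
lemma concat_one_inv {n : ℕ} {u : List (Fin 2)} (hu : u.length = n)
    (h : IsFactor w (u ++ [1])) :
    ∃ i, 1 ≤ i ∧ n + 1 ≤ G i ∧ u = wd w (G i - n) n := by
  obtain ⟨q, hq, hf⟩ := h
  rw [factorAt_concat] at hf
  obtain ⟨hf1, hf2⟩ := hf
  rw [hu] at hf2
  rw [(hG.2.2 (q + n) (by omega))] at hf2
  obtain ⟨i, hi, hie⟩ := hf2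
  refine ⟨i, hi, by omega, ?_⟩
  apply List.ext_getElem (by simp [hu])
  intro k h1 h2
  rw [factorAt_iff_getElem] at hf1
  rw [hf1 k h1, wd_getElem w (by omega)]
  congr 1
  omega

omit hg in
/-- case (a): large gap means the window is all zeros. -/
lemma window_eq_zw {n i : ℕ} (hi : 1 ≤ i) (hGi : n + 1 ≤ G i) (hgap : n < gap G i) :
    wd w (G i - n) n = zw n := by
  have hGi' : G i = G (i-1) + gap G i := G_eq_add_gap hG (by omega)
  have e1 : G (i - 1 + 1) = G i := by rw [show i - 1 + 1 = i by omega]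
  apply List.ext_getElem (by simp) (α := Fin 2)
  intro k h1 h2
  rw [wd_getElem w (by simpa using h1), zw_getElem (by simpa using h1)]
  rw [wd_length] at h1
  exact w_between hG (j := i - 1) (by omega) (by omega)

omit hg in
/-- case (b): the window contains exactly one `1`. -/
lemma window_eq_ow {n i : ℕ} (hi : 1 ≤ i) (hGi : n + 1 ≤ G i) (hgap : gap G i ≤ n)
    (hgap2 : n < gap G i + gap G (i-1)) :
    2 ≤ i ∧ wd w (G i - n) n = ow n (gap G i) := by
  have hGi' : G i = G (i-1) + gap G i := G_eq_add_gap hG (by omega)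
  have hi2 : 2 ≤ i := by
    have h1 : 1 ≤ G (i-1) := by omega
    have := G_pos_inv hG h1
    omega
  have hGi1 : G (i-1) = G (i-2) + gap G (i-1) := by
    have := G_eq_add_gap hG (i := i-1) (by omega)
    have e : i - 1 - 1 = i - 2 := by omega
    rwa [e] at this
  refine ⟨hi2, ?_⟩
  apply List.ext_getElem (by simp)
  intro k h1 h2
  rw [wd_getElem w (by simpa using h1), ow_getElem (by simpa using h1)]
  rw [wd_length] at h1
  rcases Nat.lt_trichotomy k (n - gap G i) with h | h | h
  · rw [if_neg (by omega)]
    refine w_between hG (j := i - 2) (by omega) ?_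
    rw [show i - 2 + 1 = i - 1 by omega]
    omega
  · rw [if_pos h]
    rw [show G i - n + k = G (i-1) by omega]
    exact w_G_eq_one hG (by omega)
  · rw [if_neg (by omega)]
    refine w_between hG (j := i - 1) (by omega) ?_
    rw [show i - 1 + 1 = i by omega]
    omega

/-- case (c): the window sees two `1`s, and then it is not left-extendable by `0`. -/
lemma window_not_rs {n i : ℕ} (hi : 1 ≤ i) (hGi : n + 1 ≤ G i) (hgap : gap G i ≤ n)
    (hgap2 : gap G i + gap G (i-1) ≤ n) :
    ¬ IsFactor w (wd w (G i - n) n ++ [0]) := by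
  have hGi' : G i = G (i-1) + gap G i := G_eq_add_gap hG (by omega)
  have hi2 : 2 ≤ i := by
    have h1 : 1 ≤ G (i-1) := by omega
    have := G_pos_inv hG h1
    omega
  have hGi1 : G (i-1) = G (i-2) + gap G (i-1) := by
    have := G_eq_add_gap hG (i := i-1) (by omega)
    have e : i - 1 - 1 = i - 2 := by omega
    rwa [e] at this
  have hi3 : 3 ≤ i := by
    have h1 : 1 ≤ G (i-2) := by omega
    have := G_pos_inv hG h1
    omega
  have hgp1 : 1 ≤ gap G i := gap_pos hG (by omega)
  have hgp2 : 1 ≤ gap G (i-1) := gap_pos hG (by omega)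
  rintro ⟨q, hq, hf⟩
  rw [factorAt_concat, factorAt_iff_getElem] at hf
  obtain ⟨hf1, hf2⟩ := hf
  rw [wd_length] at hf2
  -- `w (q + (n - gap G i)) = 1` since the window has a `1` there
  have hone1 : w (q + (n - gap G i)) = 1 := by
    have := hf1 (n - gap G i) (by simp; omega)
    rw [wd_getElem w (by omega)] at this
    rw [← this, show G i - n + (n - gap G i) = G (i-1) by omega]
    exact w_G_eq_one hG (by omega)
  have hone2 : w (q + (n - gap G i - gap G (i-1))) = 1 := by
    have := hf1 (n - gap G i - gap G (i-1)) (by simp; omega)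
    rw [wd_getElem w (by omega)] at this
    rw [← this, show G i - n + (n - gap G i - gap G (i-1)) = G (i-2) by omega]
    exact w_G_eq_one hG (by omega)
  rw [hG.2.2 _ (by omega)] at hone1
  obtain ⟨j, hj, hje⟩ := hone1
  rw [hG.2.2 _ (by omega)] at hone2
  obtain ⟨j', hj', hje'⟩ := hone2
  have hjj' : j' < j := by
    by_contra hcon
    have := hG.2.1.monotone (show j ≤ j' by omega)
    omega
  -- in-between positions of the window are `0`
  have hzero : ∀ k, n - gap G i - gap G (i-1) < k → k < n - gap G i → w (q + k) = 0 := by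
    intro k hk1 hk2
    have := hf1 k (by simp; omega)
    rw [wd_getElem w (by omega)] at this
    rw [← this]
    refine w_between hG (j := i - 2) (by omega) ?_
    rw [show i - 2 + 1 = i - 1 by omega]
    omega
  -- hence `j' = j - 1`
  have hjeq : j' = j - 1 := by
    by_contra hcon
    have hlt : j' < j - 1 := by omega
    have h1 : G j' < G (j-1) := hG.2.1 (by omega)
    have h2 : G (j-1) < G j := hG.2.1 (by omega)
    have hone := w_G_eq_one hG (i := j - 1) (by omega)
    have h0 := hzero (G (j-1) - q) (by omega) (by omega)
    rw [show q + (G (j-1) - q) = G (j-1) by omega] at h0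
    rw [h0] at hone
    exact absurd hone (by decide)
  have hgapj : gap G j = gap G (i-1) := by
    have h1 : gap G j = G j - G (j-1) := rfl
    rw [hjeq] at hje'
    omega
  have hji : j = i - 1 := gap_injOn hg (by omega) (by omega) hgapj
  -- but then position `q + n = G i` carries a `1`, contradicting the appended `0`
  have hGieq : G i = q + n := by
    rw [hji] at hje
    omega
  have := w_G_eq_one hG (i := i) (by omega)
  rw [hGieq, hf2] at this
  exact absurd this (by decide)

end Occur

def FSet (w : ℕ → Fin 2) (n : ℕ) : Set (List (Fin 2)) :=
  {u | u.length = n ∧ IsFactor w u}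

def RSet (w : ℕ → Fin 2) (n : ℕ) : Set (List (Fin 2)) :=
  {u | u.length = n ∧ RightSpecial w u}

def Sset (G : ℕ → ℕ) (n : ℕ) : Set ℕ :=
  {i | 2 ≤ i ∧ gap G i ≤ n ∧ n < gap G i + gap G (i-1)}

lemma FSet_finite (w : ℕ → Fin 2) (n : ℕ) : (FSet w n).Finite :=
  (List.finite_length_eq (Fin 2) n).subset (fun _ hu => hu.1)

lemma RSet_finite (w : ℕ → Fin 2) (n : ℕ) : (RSet w n).Finite :=
  (List.finite_length_eq (Fin 2) n).subset (fun _ hu => hu.1)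

lemma complexity_eq (w : ℕ → Fin 2) (n : ℕ) : complexity w n = (FSet w n).ncard := rfl

lemma complexity_succ (w : ℕ → Fin 2) (n : ℕ) :
    complexity w (n+1) = complexity w n + (RSet w n).ncard := by
  classical
  set E0 : Set (List (Fin 2)) := {u | u.length = n ∧ IsFactor w (u ++ [0])} with hE0
  set E1 : Set (List (Fin 2)) := {u | u.length = n ∧ IsFactor w (u ++ [1])} with hE1
  have hE0fin : E0.Finite := (List.finite_length_eq (Fin 2) n).subset (fun _ hu => hu.1)
  have hE1fin : E1.Finite := (List.finite_length_eq (Fin 2) n).subset (fun _ hu => hu.1)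
  have hunion : E0 ∪ E1 = FSet w n := by
    ext u
    constructor
    · rintro (⟨h1, h2⟩ | ⟨h1, h2⟩) <;> exact ⟨h1, isFactor_of_concat h2⟩
    · rintro ⟨h1, q, hq, hf⟩
      rcases fin_two_cases (w (q + n)) with h | h
      · exact Or.inl ⟨h1, q, hq, factorAt_concat.2 ⟨hf, by rw [h1]; exact h⟩⟩
      · exact Or.inr ⟨h1, q, hq, factorAt_concat.2 ⟨hf, by rw [h1]; exact h⟩⟩
  have hinter : E0 ∩ E1 = RSet w n := by
    ext u
    exact ⟨fun ⟨⟨h1, h2⟩, ⟨_, h3⟩⟩ => ⟨h1, h2, h3⟩, fun ⟨h1, h2, h3⟩ => ⟨⟨h1, h2⟩, ⟨h1, h3⟩⟩⟩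
  have himg : FSet w (n+1) = (fun u => u ++ [0]) '' E0 ∪ (fun u => u ++ [1]) '' E1 := by
    ext v
    constructor
    · rintro ⟨hlen, hfac⟩
      obtain ⟨u, a, rfl⟩ : ∃ u a, v = u ++ [a] := by
        rcases List.eq_nil_or_concat v with h | ⟨u, a, h⟩
        · rw [h] at hlen; simp at hlen
        · exact ⟨u, a, by rw [h, List.concat_eq_append]⟩
      have hul : u.length = n := by
        simp only [List.length_append, List.length_singleton] at hlen; omega
      rcases fin_two_cases a with rfl | rfl
      · exact Or.inl ⟨u, ⟨hul, hfac⟩, rfl⟩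
      · exact Or.inr ⟨u, ⟨hul, hfac⟩, rfl⟩
    · rintro (⟨u, ⟨h1, h2⟩, rfl⟩ | ⟨u, ⟨h1, h2⟩, rfl⟩) <;>
        exact ⟨by simp [h1], h2⟩
  have hinj0 : Set.InjOn (fun u : List (Fin 2) => u ++ [0]) E0 := by
    intro a _ b _ h
    exact (List.append_inj' h rfl).1
  have hinj1 : Set.InjOn (fun u : List (Fin 2) => u ++ [1]) E1 := by
    intro a _ b _ h
    exact (List.append_inj' h rfl).1
  have hdisj : Disjoint ((fun u : List (Fin 2) => u ++ [0]) '' E0)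
      ((fun u : List (Fin 2) => u ++ [1]) '' E1) := by
    rw [Set.disjoint_left]
    rintro v ⟨u, _, rfl⟩ ⟨u', _, heq⟩
    have := (List.append_inj' heq rfl).2
    simp at this
  calc complexity w (n+1) = (FSet w (n+1)).ncard := rfl
    _ = ((fun u : List (Fin 2) => u ++ [0]) '' E0 ∪
          (fun u : List (Fin 2) => u ++ [1]) '' E1).ncard := by rw [himg]
    _ = ((fun u : List (Fin 2) => u ++ [0]) '' E0).ncard +
          ((fun u : List (Fin 2) => u ++ [1]) '' E1).ncard :=
        Set.ncard_union_eq hdisj (hE0fin.image _) (hE1fin.image _)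
    _ = E0.ncard + E1.ncard := by
        rw [Set.ncard_image_of_injOn hinj0, Set.ncard_image_of_injOn hinj1]
    _ = (E0 ∪ E1).ncard + (E0 ∩ E1).ncard :=
        (Set.ncard_union_add_ncard_inter E0 E1 hE0fin hE1fin).symm
    _ = complexity w n + (RSet w n).ncard := by
        rw [hunion, hinter, complexity_eq]

lemma ow_inj {n g g' : ℕ} (h1 : 1 ≤ g) (h2 : g ≤ n) (h3 : 1 ≤ g') (h4 : g' ≤ n)
    (h : ow n g = ow n g') : g = g' := by
  by_contra hne
  have hidx : n - g < n := by omega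
  have heg := List.getElem_of_eq h (show n - g < (ow n g).length by rw [ow_length]; exact hidx)
  rw [ow_getElem hidx, ow_getElem hidx, if_pos rfl, if_neg (by omega)] at heg
  exact absurd heg (by decide)

lemma zw_ne_ow {n g : ℕ} (h1 : 1 ≤ g) (h2 : g ≤ n) : zw n ≠ ow n g := by
  intro h
  have hidx : n - g < n := by omega
  have heg := List.getElem_of_eq h (show n - g < (zw n).length by rw [zw_length]; exact hidx)
  rw [zw_getElem hidx, ow_getElem hidx, if_pos rfl] at heg
  exact absurd heg (by decide)

section Main

variable {w : ℕ → Fin 2} {G : ℕ → ℕ} (hG : OneDistrib w G) (hg : GapIncreasing G)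
include hG hg

lemma RSet_eq {n : ℕ} (hn : 1 ≤ n) :
    RSet w n = insert (zw n) ((fun i => ow n (gap G i)) '' Sset G n) := by
  ext u
  constructor
  · rintro ⟨hlen, h0, h1⟩
    obtain ⟨i, hi, hGi, hu⟩ := concat_one_inv hG hlen h1
    rcases Nat.lt_or_ge n (gap G i) with hgap | hgap
    · left
      rw [hu]
      exact window_eq_zw hG hi hGi hgap
    · rcases Nat.lt_or_ge n (gap G i + gap G (i-1)) with hsum | hsum
      · obtain ⟨hi2, he⟩ := window_eq_ow hG hi hGi hgap hsum
        right
        exact ⟨i, ⟨hi2, hgap, hsum⟩, by rw [hu, he]⟩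
      · exfalso
        rw [hu] at h0
        exact window_not_rs hG hg hi hGi hgap hsum h0
  · rintro (rfl | ⟨i, ⟨hi2, hgap, hsum⟩, rfl⟩)
    · exact ⟨zw_length n, zw_concat_zero_isFactor hG hg n, zw_concat_one_isFactor hG hg n⟩
    · refine ⟨ow_length n _, ?_, ow_concat_one_isFactor hG hi2 hgap hsum⟩
      exact ow_concat_zero_isFactor hG hg (gap_pos hG (by omega)) hgap

lemma Sset_finite (n : ℕ) : (Sset G n).Finite := by
  apply (Set.finite_Icc 2 n).subset
  rintro i ⟨h1, h2, _⟩
  have := le_gap hg hG (show 1 ≤ i by omega)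
  exact ⟨h1, by omega⟩

lemma RSet_ncard {n : ℕ} (hn : 1 ≤ n) :
    (RSet w n).ncard = (Sset G n).ncard + 1 := by
  rw [RSet_eq hG hg hn]
  have hinj : Set.InjOn (fun i => ow n (gap G i)) (Sset G n) := by
    rintro i ⟨hi2, hgi, _⟩ j ⟨hj2, hgj, _⟩ h
    have hgp1 : 1 ≤ gap G i := gap_pos hG (by omega)
    have hgp2 : 1 ≤ gap G j := gap_pos hG (by omega)
    exact gap_injOn hg (by omega) (by omega) (ow_inj hgp1 hgi hgp2 hgj h)
  have hnm : zw n ∉ (fun i => ow n (gap G i)) '' Sset G n := by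
    rintro ⟨i, ⟨hi2, hgi, _⟩, he⟩
    exact zw_ne_ow (gap_pos hG (by omega)) hgi he.symm
  rw [Set.ncard_insert_of_notMem hnm ((Sset_finite hG hg n).image _),
    Set.ncard_image_of_injOn hinj]

lemma complexity_one : complexity w 1 = 2 := by
  have hset : FSet w 1 = {zw 1, [1]} := by
    ext u
    constructor
    · rintro ⟨hlen, _⟩
      obtain ⟨a, rfl⟩ := List.length_eq_one_iff.1 hlen
      rcases fin_two_cases a with rfl | rfl
      · exact Or.inl rfl
      · exact Or.inr rfl
    · rintro (rfl | rfl)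
      · exact ⟨zw_length 1, zw_isFactor hG hg 1⟩
      · refine ⟨rfl, G 1, G_pos hG le_rfl, ?_⟩
        rw [factorAt_iff_getElem]
        intro k hk
        have hk0 : k = 0 := by simpa using hk
        subst hk0
        simpa using (w_G_eq_one hG le_rfl).symm
  rw [complexity_eq, hset, Set.ncard_pair (by decide : zw 1 ≠ [1])]

lemma Sset_one : Sset G 1 = ∅ := by
  ext i
  simp only [Sset, Set.mem_setOf_eq, Set.mem_empty_iff_false, iff_false]
  rintro ⟨h2, hle, _⟩
  have := le_gap hg hG (show 1 ≤ i by omega)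
  omega

lemma complexity_two : complexity w 2 = 3 := by
  have h := complexity_succ w 1
  rw [RSet_ncard hG hg le_rfl, Sset_one hG hg, complexity_one hG hg] at h
  simpa using h

lemma Sset_grow_subsingleton (n : ℕ) : (Sset G (n+1) \ Sset G n).Subsingleton := by
  rintro i ⟨⟨hi2, hgi, hsi⟩, hni⟩ j ⟨⟨hj2, hgj, hsj⟩, hnj⟩
  have hgp1 : 1 ≤ gap G (i-1) := gap_pos hG (by omega)
  have hgp2 : 1 ≤ gap G (j-1) := gap_pos hG (by omega)
  have hei : gap G i = n + 1 := by
    by_contra hc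
    exact hni ⟨hi2, by omega, by omega⟩
  have hej : gap G j = n + 1 := by
    by_contra hc
    exact hnj ⟨hj2, by omega, by omega⟩
  exact gap_injOn hg (by omega) (by omega) (by omega)

omit hG in
lemma Sset_shrink_subsingleton (n : ℕ) : (Sset G n \ Sset G (n+1)).Subsingleton := by
  rintro i ⟨⟨hi2, hgi, hsi⟩, hni⟩ j ⟨⟨hj2, hgj, hsj⟩, hnj⟩
  have hei : gap G i + gap G (i-1) = n + 1 := by
    by_contra hc
    exact hni ⟨hi2, by omega, by omega⟩
  have hej : gap G j + gap G (j-1) = n + 1 := by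
    by_contra hc
    exact hnj ⟨hj2, by omega, by omega⟩
  rcases Nat.lt_trichotomy i j with h | h | h
  · have := gapsum_lt_gapsum hg hi2 h; omega
  · exact h
  · have := gapsum_lt_gapsum hg hj2 h; omega

omit hG hg in
lemma ncard_le_of_diff_subsingleton {s t : Set ℕ} (hs : s.Finite) (ht : t.Finite)
    (h : (s \ t).Subsingleton) : s.ncard ≤ t.ncard + 1 := by
  have h1 := Set.ncard_inter_add_ncard_diff_eq_ncard s t hs
  have h2 : (s ∩ t).ncard ≤ t.ncard := Set.ncard_le_ncard Set.inter_subset_right ht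
  have h3 : (s \ t).ncard ≤ 1 := by
    rcases h.eq_empty_or_singleton with he | ⟨a, he⟩ <;> simp [he]
  omega

end Main

end GapWord

theorem stmt12 (w : ℕ → Fin 2) (G : ℕ → ℕ) (hG : OneDistrib w G)
    (hg : GapIncreasing G) :
    complexity w 1 = 2 ∧ complexity w 2 = 3 ∧
    ∀ n, 1 ≤ n →
      |((complexity w (n + 2) : ℤ) - (complexity w (n + 1) : ℤ))
        - ((complexity w (n + 1) : ℤ) - (complexity w n : ℤ))| ≤ 1 := by
  refine ⟨GapWord.complexity_one hG hg, GapWord.complexity_two hG hg, ?_⟩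
  intro n hn
  have r1 : complexity w (n+1) = complexity w n + ((GapWord.Sset G n).ncard + 1) := by
    rw [GapWord.complexity_succ, GapWord.RSet_ncard hG hg hn]
  have r2 : complexity w (n+2) = complexity w (n+1) + ((GapWord.Sset G (n+1)).ncard + 1) := by
    rw [show n+2 = (n+1)+1 from rfl, GapWord.complexity_succ,
      GapWord.RSet_ncard hG hg (by omega)]
  have b1 := GapWord.ncard_le_of_diff_subsingleton (GapWord.Sset_finite hG hg (n+1))
    (GapWord.Sset_finite hG hg n) (GapWord.Sset_grow_subsingleton hG hg n)
  have b2 := GapWord.ncard_le_of_diff_subsingleton (GapWord.Sset_finite hG hg n)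
    (GapWord.Sset_finite hG hg (n+1)) (GapWord.Sset_shrink_subsingleton hg n)
  rw [abs_le, r1, r2]
  push_cast
  omega
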